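/- FKL counterexample: in the single-state MDP with two actions a₁, a₂ whose rewards are r(a₁) = −1 and r(a₂) = 1 and deterministic self-transition, for any τ ≥ 0 and discount γ ∈ [0,1), there exist policies π_old (placing probability ε₁ on a₁) and π_new (placing probability 1−ε₂ on a₁) such that FKL(π_new ‖ B_τQ_τ^{π_old}) < FKL(π_old ‖ B_τQ_τ^{π_old}) yet η_τ(π_new) < η_τ(π_old). -/

import Mathlib

open Finset

/-- Entropy of a Bernoulli distribution with success probability `p`. -/
noncomputable def H2 (p : ℝ) : ℝ := -(p * Real.log p) - (1 - p) * Real.log (1 - p)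

/-- Soft value of the single-state two-action MDP for a policy putting
probability `p` on the good action `a₂` (rewards `r(a₁) = −1`, `r(a₂) = 1`). -/
noncomputable def V2 (τ γ p : ℝ) : ℝ := ((2 * p - 1) + τ * H2 p) / (1 - γ)

/-- Soft action-values: `Q_τ^π(aᵢ) = r(aᵢ) + γ V_τ^π`. Index `0` is `a₁`. -/
noncomputable def Q2 (τ γ p : ℝ) (i : Fin 2) : ℝ :=
  (if i = 0 then (-1 : ℝ) else 1) + γ * V2 τ γ p

/-- Boltzmann distribution over the soft action-values. -/
noncomputable def B2 (τ γ p : ℝ) (i : Fin 2) : ℝ :=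
  Real.exp (Q2 τ γ p i / τ) / ∑ j, Real.exp (Q2 τ γ p j / τ)

/-- Forward KL of a policy `π` to the Boltzmann target of the policy with
probability `p` on `a₂`: `FKL(π‖B) = ∑ᵢ B(i) log(B(i)/π(i))`. -/
noncomputable def FKL2 (τ γ p : ℝ) (π : Fin 2 → ℝ) : ℝ :=
  ∑ i, B2 τ γ p i * Real.log (B2 τ γ p i / π i)

/-- FKL counterexample: in the single-state MDP with rewards `r(a₁)=−1`, `r(a₂)=1`,
for any `τ ≥ 0` and `γ ∈ [0,1)` there exist `π_old = (ε₁, 1−ε₁)` and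
`π_new = (1−ε₂, ε₂)` such that the forward KL to `B_τ Q_τ^{π_old}` strictly
decreases while the soft value strictly decreases. -/
lemma H2_nonneg {p : ℝ} (h0 : 0 < p) (h1 : p < 1) : 0 ≤ H2 p := by
  have a1 : p * Real.log p ≤ 0 :=
    mul_nonpos_of_nonneg_of_nonpos h0.le (Real.log_nonpos h0.le h1.le)
  have a2 : (1 - p) * Real.log (1 - p) ≤ 0 :=
    mul_nonpos_of_nonneg_of_nonpos (by linarith) (Real.log_nonpos (by linarith) (by linarith))
  unfold H2; linarith

lemma H2_le {p : ℝ} (h0 : 0 < p) (h1 : p < 1) : H2 p ≤ p * (-Real.log p + 1) := by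
  have hp1 : (0:ℝ) < 1 - p := by linarith
  have h := Real.log_le_sub_one_of_pos (show (0:ℝ) < (1-p)⁻¹ by positivity)
  rw [Real.log_inv] at h
  have h2 : (1 - p) * (-Real.log (1 - p)) ≤ (1 - p) * ((1-p)⁻¹ - 1) :=
    mul_le_mul_of_nonneg_left h hp1.le
  have h3 : (1 - p) * ((1-p)⁻¹ - 1) = p := by field_simp; ring
  unfold H2; nlinarith

lemma Q2_one (τ γ p : ℝ) : Q2 τ γ p 1 = Q2 τ γ p 0 + 2 := by
  simp [Q2]; ring

lemma B2_zero (τ γ p : ℝ) : B2 τ γ p 0 = 1 / (1 + Real.exp (2/τ)) := by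
  have hq : Q2 τ γ p 1 / τ = Q2 τ γ p 0 / τ + 2 / τ := by rw [← add_div, Q2_one]
  have he := Real.exp_pos (Q2 τ γ p 0 / τ)
  have hE := Real.exp_pos (2/τ)
  unfold B2
  rw [Fin.sum_univ_two, hq, Real.exp_add]
  rw [div_eq_div_iff (by positivity) (by positivity)]; ring

lemma B2_one (τ γ p : ℝ) : B2 τ γ p 1 = Real.exp (2/τ) / (1 + Real.exp (2/τ)) := by
  have hq : Q2 τ γ p 1 / τ = Q2 τ γ p 0 / τ + 2 / τ := by rw [← add_div, Q2_one]
  have he := Real.exp_pos (Q2 τ γ p 0 / τ)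
  have hE := Real.exp_pos (2/τ)
  unfold B2
  rw [Fin.sum_univ_two, hq, Real.exp_add]
  rw [div_eq_div_iff (by positivity) (by positivity)]; ring

theorem fkl_counterexample (τ γ : ℝ) (hτ : 0 ≤ τ) (hγ0 : 0 ≤ γ) (hγ1 : γ < 1) :
    ∃ ε₁ ε₂ : ℝ, 0 < ε₁ ∧ ε₁ < 1 ∧ 0 < ε₂ ∧ ε₂ < 1 ∧
      FKL2 τ γ (1 - ε₁) ![1 - ε₂, ε₂] < FKL2 τ γ (1 - ε₁) ![ε₁, 1 - ε₁] ∧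
      V2 τ γ ε₂ < V2 τ γ (1 - ε₁) := by
  have hE1 : 1 ≤ Real.exp (2/τ) := Real.one_le_exp (by positivity)
  set E := Real.exp (2/τ) with hEdef
  set b : ℝ := 1 / (1 + E) with hbdef
  have h1E : (0:ℝ) < 1 + E := by linarith
  have hb0 : 0 < b := by positivity
  have hbh : b ≤ 1/2 := by
    rw [hbdef, div_le_div_iff₀ h1E (by norm_num)]; linarith
  have hτ2 : (0:ℝ) < τ + 2 := by linarith
  set ε₁ : ℝ := Real.exp (-((τ+2)/b) - 1) with hε₁def
  set ε₂ : ℝ := Real.exp (-(τ+2)) with hε₂def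
  have hdb : 2*(τ+2) ≤ (τ+2)/b := by
    rw [le_div_iff₀ hb0]; nlinarith
  have hε₁0 : 0 < ε₁ := Real.exp_pos _
  have hε₂0 : 0 < ε₂ := Real.exp_pos _
  have hε₁le : ε₁ ≤ 1/6 := by
    have h5 : ε₁ ≤ Real.exp (-(5:ℝ)) := Real.exp_le_exp.mpr (by linarith)
    have h6 : (6:ℝ) ≤ Real.exp 5 := by have := Real.add_one_le_exp (5:ℝ); linarith
    have h7 : Real.exp (-(5:ℝ)) ≤ 1/6 := by
      rw [Real.exp_neg, inv_le_comm₀ (Real.exp_pos _) (by norm_num)]; linarith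
    linarith
  have hε₂le : ε₂ ≤ 1/3 := by
    have h6 : (3:ℝ) ≤ Real.exp 2 := by have := Real.add_one_le_exp (2:ℝ); linarith
    have h7 : ε₂ ≤ Real.exp (-(2:ℝ)) := Real.exp_le_exp.mpr (by linarith)
    have h8 : Real.exp (-(2:ℝ)) ≤ 1/3 := by
      rw [Real.exp_neg, inv_le_comm₀ (Real.exp_pos _) (by norm_num)]; linarith
    linarith
  have hε₁1 : ε₁ < 1 := by linarith
  have hε₂1 : ε₂ < 1 := by linarith
  have h1ε₁ : (0:ℝ) < 1 - ε₁ := by linarith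
  have h1ε₂ : (0:ℝ) < 1 - ε₂ := by linarith
  have hlε₁ : Real.log ε₁ = -((τ+2)/b) - 1 := Real.log_exp _
  have hlε₂ : Real.log ε₂ = -(τ+2) := Real.log_exp _
  refine ⟨ε₁, ε₂, hε₁0, hε₁1, hε₂0, hε₂1, ?_, ?_⟩
  · -- FKL inequality
    have hc0 : (0:ℝ) < E / (1 + E) := by positivity
    have hc1 : E / (1 + E) = 1 - b := by rw [hbdef]; field_simp; ring
    rw [show FKL2 τ γ (1 - ε₁) ![1 - ε₂, ε₂] =
        b * Real.log (b / (1 - ε₂)) + (1 - b) * Real.log ((1 - b) / ε₂) by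
      unfold FKL2
      rw [Fin.sum_univ_two, B2_zero, B2_one, ← hEdef, ← hbdef, hc1]
      simp]
    rw [show FKL2 τ γ (1 - ε₁) ![ε₁, 1 - ε₁] =
        b * Real.log (b / ε₁) + (1 - b) * Real.log ((1 - b) / (1 - ε₁)) by
      unfold FKL2
      rw [Fin.sum_univ_two, B2_zero, B2_one, ← hEdef, ← hbdef, hc1]
      simp]
    have hb1 : (0:ℝ) < 1 - b := by linarith
    rw [Real.log_div hb0.ne' h1ε₂.ne', Real.log_div hb1.ne' hε₂0.ne',
        Real.log_div hb0.ne' hε₁0.ne', Real.log_div hb1.ne' h1ε₁.ne']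
    have hblog : b * Real.log ε₁ = -(τ+2) - b := by
      rw [hlε₁]; field_simp
    have hL1 : -1 ≤ Real.log (1 - ε₂) := by
      rw [Real.le_log_iff_exp_le h1ε₂]
      have h6 : (2:ℝ) ≤ Real.exp 1 := by have := Real.add_one_le_exp (1:ℝ); linarith
      have : Real.exp (-(1:ℝ)) ≤ 1/2 := by
        rw [Real.exp_neg, inv_le_comm₀ (Real.exp_pos _) (by norm_num)]; linarith
      linarith
    have hL2 : Real.log (1 - ε₁) ≤ 0 := Real.log_nonpos h1ε₁.le (by linarith)
    have h1 : b * (-1) ≤ b * Real.log (1 - ε₂) := mul_le_mul_of_nonneg_left hL1 hb0.le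
    have h2 : (1 - b) * Real.log (1 - ε₁) ≤ 0 := mul_nonpos_of_nonneg_of_nonpos hb1.le hL2
    have h3 : 0 < b * (τ+2) := mul_pos hb0 hτ2
    have h4 : (1 - b) * Real.log ε₂ = -(τ+2) + b * (τ+2) := by rw [hlε₂]; ring
    nlinarith [hblog, h1, h2, h3, h4]
  · -- value inequality
    have hγ : (0:ℝ) < 1 - γ := by linarith
    have hH2b : 0 ≤ τ * H2 (1 - ε₁) :=
      mul_nonneg hτ (H2_nonneg h1ε₁ (by linarith))
    have hH2a : τ * H2 ε₂ < 1 := by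
      have hHle : H2 ε₂ ≤ ε₂ * (-Real.log ε₂ + 1) := H2_le hε₂0 hε₂1
      rw [hlε₂] at hHle
      have h1 : τ * H2 ε₂ ≤ τ * (ε₂ * (τ + 3)) := by
        apply mul_le_mul_of_nonneg_left _ hτ
        calc H2 ε₂ ≤ ε₂ * (-(-(τ+2)) + 1) := hHle
          _ = ε₂ * (τ + 3) := by ring
      have key : τ * (τ+3) < Real.exp (τ + 2) := by
        have ha1 : (τ+2)/4 + 1 ≤ Real.exp ((τ+2)/4) := Real.add_one_le_exp _
        have hp : (0:ℝ) ≤ (τ+2)/4 + 1 := by linarith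
        have ha2 : ((τ+2)/4 + 1)^4 ≤ (Real.exp ((τ+2)/4))^4 := pow_le_pow_left₀ hp ha1 4
        have ha3 : (Real.exp ((τ+2)/4))^4 = Real.exp (τ+2) := by
          rw [← Real.exp_nat_mul]; ring_nf
        have ha4 : τ * (τ+3) < ((τ+2)/4 + 1)^4 := by
          nlinarith [pow_nonneg hτ 4, mul_nonneg hτ (sq_nonneg (τ - 5/6)), sq_nonneg (τ - 5/6), sq_nonneg τ]
        linarith
      have h2 : τ * (ε₂ * (τ + 3)) < 1 := by
        rw [hε₂def, Real.exp_neg, show τ * ((Real.exp (τ+2))⁻¹ * (τ+3)) =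
          (τ * (τ+3)) / Real.exp (τ+2) by ring, div_lt_one (Real.exp_pos _)]
        exact key
      linarith
    rw [V2, V2, div_lt_div_iff_of_pos_right hγ]
    linarith
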